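/- arXiv:gr-qc/9811039 — 2 statements merged into one kernel-verified Lean document; each statement's English description precedes it below -/
import Mathlib

section
/- Let a < b be real, λ ∈ (0,1], and let χ : ℝ → ℂ be Hölder continuous with exponent λ on [a,b] (i.e. there is c ≥ 0 with |χ(x) − χ(y)| ≤ c|x − y|^λ for x,y ∈ [a,b]). For K ∈ ℂ ∖ [a,b] define Φ(K) = (1/(2πi))∫_a^b χ(X)/(X − K) dX. Then for every t ∈ (a,b) the one-sided boundary values of Φ exist and satisfy the Plemelj formulas: lim_{ε→0⁺} Φ(t + iε) = (1/2)χ(t) + (1/(2πi))·PV∫_a^b χ(X)/(X − t) dX and lim_{ε→0⁺} Φ(t − iε) = −(1/2)χ(t) + (1/(2πi))·PV∫_a^b χ(X)/(X − t) dX, where the principal value is PV∫_a^b χ(X)/(X−t) dX := lim_{δ→0⁺} ( ∫_a^{t−δ} χ(X)/(X−t) dX + ∫_{t+δ}^b χ(X)/(X−t) dX ). -/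
open intervalIntegral Filter Complex

namespace PlemeljAux

/-- The complex Cauchy kernel integral for `K` off the real axis. -/
lemma integral_kernelC (a b : ℝ) (K : ℂ) (hK : K.im ≠ 0) :
    ∫ X in a..b, 1 / ((X : ℂ) - K) =
      Complex.log ((b : ℂ) - K) - Complex.log ((a : ℂ) - K) := by
  have hne : ∀ X : ℝ, ((X : ℂ) - K) ≠ 0 := by
    intro X h
    apply hK
    have := congrArg Complex.im h
    simpa using this.symm
  have hslit : ∀ X : ℝ, ((X : ℂ) - K) ∈ Complex.slitPlane := by
    intro X
    refine Or.inr ?_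
    simpa using hK
  have hder : ∀ X ∈ Set.uIcc a b,
      HasDerivAt (fun X : ℝ => Complex.log ((X : ℂ) - K)) (1 / ((X : ℂ) - K)) X := by
    intro X _
    have h1 : HasDerivAt (fun z : ℂ => Complex.log (z - K)) (((X : ℂ) - K)⁻¹ * 1) (X : ℂ) := by
      have := (Complex.hasDerivAt_log (hslit X)).comp (X : ℂ) ((hasDerivAt_id (X : ℂ)).sub_const K)
      exact this
    simpa [one_div] using h1.comp_ofReal
  have hint : IntervalIntegrable (fun X : ℝ => 1 / ((X : ℂ) - K)) MeasureTheory.volume a b := by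
    apply Continuous.intervalIntegrable
    exact continuous_const.div (by continuity) (fun X => hne X)
  exact integral_eq_sub_of_hasDerivAt hder hint

/-- The real Cauchy kernel integral when the pole is outside the interval. -/
lemma integral_kernelR (a' b' t : ℝ) (h : t ∉ Set.uIcc a' b') :
    ∫ X in a'..b', 1 / ((X : ℂ) - (t : ℂ)) =
      ((Real.log ((b' - t) / (a' - t)) : ℝ) : ℂ) := by
  have h0 : (fun X : ℝ => 1 / ((X : ℂ) - (t : ℂ))) = fun X : ℝ => ((1 / (X - t) : ℝ) : ℂ) := by
    funext X; push_cast; ring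
  rw [h0, intervalIntegral.integral_ofReal]
  congr 1
  have h1 : (fun X : ℝ => 1 / (X - t)) = fun X : ℝ => (fun u : ℝ => 1 / u) (X - t) := rfl
  rw [h1, intervalIntegral.integral_comp_sub_right (fun u : ℝ => 1 / u) t]
  apply integral_one_div
  intro h0'
  apply h
  rcases Set.mem_uIcc.1 h0' with ⟨h1', h2'⟩ | ⟨h1', h2'⟩
  · exact Set.mem_uIcc.2 (Or.inl ⟨by linarith, by linarith⟩)
  · exact Set.mem_uIcc.2 (Or.inr ⟨by linarith, by linarith⟩)

/-- Integrability of `|X - t| ^ r` for `r > -1`. -/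
lemma intervalIntegrable_abs_rpow (t : ℝ) {r : ℝ} (hr : -1 < r) (a b : ℝ)
    (hat : a ≤ t) (htb : t ≤ b) :
    IntervalIntegrable (fun X : ℝ => |X - t| ^ r) MeasureTheory.volume a b := by
  have hleft : IntervalIntegrable (fun X : ℝ => |X - t| ^ r) MeasureTheory.volume a t := by
    have h2 : IntervalIntegrable (fun x : ℝ => (t - x) ^ r) MeasureTheory.volume a t := by
      simpa using (intervalIntegrable_rpow' hr (a := t - a) (b := t - t)).comp_sub_left t
    rw [intervalIntegrable_iff] at h2 ⊢
    apply h2.congr_fun ?_ measurableSet_uIoc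
    intro x hx
    rw [Set.uIoc_of_le hat] at hx
    simp only [_root_.abs_of_nonpos (by linarith [hx.2] : x - t ≤ 0), neg_sub]
  have hright : IntervalIntegrable (fun X : ℝ => |X - t| ^ r) MeasureTheory.volume t b := by
    have h2 : IntervalIntegrable (fun x : ℝ => (x - t) ^ r) MeasureTheory.volume t b := by
      simpa using (intervalIntegrable_rpow' hr (a := t - t) (b := b - t)).comp_sub_right t
    rw [intervalIntegrable_iff] at h2 ⊢
    apply h2.congr_fun ?_ measurableSet_uIoc
    intro x hx
    rw [Set.uIoc_of_le htb] at hx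
    simp only [_root_.abs_of_nonneg (by linarith [hx.1] : 0 ≤ x - t)]
  exact hleft.trans hright

end PlemeljAux

/-- Sokhotski–Plemelj formulas on the real interval [a,b]: for a Hölder
continuous density χ, the principal value PV∫_a^b χ(X)/(X−t) dX exists for
t ∈ (a,b), and the one-sided boundary values of the Cauchy integral
Φ(K) = (1/2πi)∫_a^b χ(X)/(X−K) dX from the upper/lower half-plane are
±(1/2)χ(t) + (1/2πi)·PV∫_a^b χ(X)/(X−t) dX. -/
theorem plemelj_formula
    (a b : ℝ) (hab : a < b) (lam : ℝ) (hlam : lam ∈ Set.Ioc (0 : ℝ) 1)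
    (χ : ℝ → ℂ) (c : ℝ) (hc : 0 ≤ c)
    (hHolder : ∀ x ∈ Set.Icc a b, ∀ y ∈ Set.Icc a b,
      ‖χ x - χ y‖ ≤ c * |x - y| ^ lam)
    (Φ : ℂ → ℂ)
    (hΦ : ∀ K : ℂ, K ∉ ((fun x : ℝ => (x : ℂ)) '' Set.Icc a b) →
      Φ K = (1 / (2 * Real.pi * I)) * ∫ X in a..b, χ X / ((X : ℂ) - K)) :
    ∀ t ∈ Set.Ioo a b, ∃ pv : ℂ,
      Tendsto (fun δ : ℝ =>
          (∫ X in a..(t - δ), χ X / ((X : ℂ) - (t : ℂ))) +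
            ∫ X in (t + δ)..b, χ X / ((X : ℂ) - (t : ℂ)))
        (nhdsWithin 0 (Set.Ioi 0)) (nhds pv) ∧
      Tendsto (fun ε : ℝ => Φ ((t : ℂ) + ε * I))
        (nhdsWithin 0 (Set.Ioi 0))
        (nhds ((1 / 2) * χ t + (1 / (2 * Real.pi * I)) * pv)) ∧
      Tendsto (fun ε : ℝ => Φ ((t : ℂ) - ε * I))
        (nhdsWithin 0 (Set.Ioi 0))
        (nhds (-(1 / 2) * χ t + (1 / (2 * Real.pi * I)) * pv)) := by
  intro t ht
  obtain ⟨hat, htb⟩ := ht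
  have hlam0 : 0 < lam := hlam.1
  have htmem : t ∈ Set.Icc a b := ⟨hat.le, htb.le⟩
  -- continuity of χ on [a,b]
  have hχc : ContinuousOn χ (Set.Icc a b) := by
    intro x hx
    have hb0 : Tendsto (fun y : ℝ => c * |y - x| ^ lam)
        (nhdsWithin x (Set.Icc a b)) (nhds 0) := by
      have h1 : Tendsto (fun y : ℝ => |y - x|) (nhds x) (nhds 0) := by
        have := ((continuous_id.sub (continuous_const (y := x))).abs).tendsto x
        simpa using this
      have h2 : ContinuousAt (fun z : ℝ => z ^ lam) 0 :=
        Real.continuousAt_rpow_const 0 lam (Or.inr hlam0.le)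
      have h3 := (h2.tendsto.comp h1).const_mul c
      rw [Real.zero_rpow hlam0.ne', mul_zero] at h3
      exact h3.mono_left nhdsWithin_le_nhds
    rw [ContinuousWithinAt, tendsto_iff_dist_tendsto_zero]
    apply squeeze_zero' (Filter.Eventually.of_forall fun y => dist_nonneg) ?_ hb0
    filter_upwards [self_mem_nhdsWithin] with y hy
    have := hHolder y hy x hx
    simpa [Complex.dist_eq] using this
  set g : ℝ → ℂ := fun X => (χ X - χ t) / ((X : ℂ) - (t : ℂ)) with hgdef
  have habs : ∀ X : ℝ, ‖(X : ℂ) - (t : ℂ)‖ = |X - t| := by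
    intro X
    rw [← Complex.ofReal_sub, Complex.norm_real, Real.norm_eq_abs]
  -- the basic bound
  have hgbound : ∀ X ∈ Set.Icc a b, ∀ K : ℂ,
      ‖(X : ℂ) - (t : ℂ)‖ ≤ ‖(X : ℂ) - K‖ →
      ‖(χ X - χ t) / ((X : ℂ) - K)‖ ≤ c * |X - t| ^ (lam - 1) := by
    intro X hX K hK
    by_cases hXt : X = t
    · subst hXt
      simp only [sub_self, zero_div, norm_zero]
      positivity
    · have h0 : (0 : ℝ) < |X - t| := abs_pos.2 (sub_ne_zero.2 hXt)
      rw [norm_div]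
      calc ‖χ X - χ t‖ / ‖(X : ℂ) - K‖ ≤ (c * |X - t| ^ lam) / |X - t| := by
            apply div_le_div₀ (by positivity) (hHolder X hX t htmem) h0
            calc |X - t| = ‖(X : ℂ) - (t : ℂ)‖ := (habs X).symm
              _ ≤ _ := hK
        _ = c * |X - t| ^ (lam - 1) := by
            rw [Real.rpow_sub_one h0.ne']; ring
  have hdom : IntervalIntegrable (fun X : ℝ => c * |X - t| ^ (lam - 1))
      MeasureTheory.volume a b :=
    (PlemeljAux.intervalIntegrable_abs_rpow t (by linarith : (-1 : ℝ) < lam - 1)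
      a b hat.le htb.le).const_mul c
  -- integrability of g
  have hg_int : IntervalIntegrable g MeasureTheory.volume a b := by
    rw [intervalIntegrable_iff, Set.uIoc_of_le hab.le]
    have hmeas : MeasurableSet (Set.Ioc a b \ {t}) :=
      measurableSet_Ioc.diff (measurableSet_singleton t)
    have hcont : ContinuousOn g (Set.Ioc a b \ {t}) := by
      apply ContinuousOn.div
      · exact ((hχc.mono (fun x hx => Set.Ioc_subset_Icc_self hx.1)).sub continuousOn_const)
      · exact (Complex.continuous_ofReal.continuousOn.sub continuousOn_const)
      · intro x hx
        simp only [Set.mem_diff, Set.mem_singleton_iff] at hx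
        rw [sub_ne_zero]
        exact_mod_cast hx.2
    have hsm : MeasureTheory.AEStronglyMeasurable g
        (MeasureTheory.volume.restrict (Set.Ioc a b)) := by
      have h1 := ContinuousOn.aestronglyMeasurable (μ := MeasureTheory.volume) hcont hmeas
      have h2 : MeasureTheory.volume.restrict (Set.Ioc a b \ {t})
          = MeasureTheory.volume.restrict (Set.Ioc a b) := by
        apply MeasureTheory.Measure.restrict_congr_set
        refine MeasureTheory.diff_ae_eq_self.2 ?_
        exact MeasureTheory.measure_mono_null
          (Set.inter_subset_right : Set.Ioc a b ∩ {t} ⊆ {t})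
          (MeasureTheory.measure_singleton t)
      rwa [h2] at h1
    have hdom' : MeasureTheory.IntegrableOn (fun X : ℝ => c * |X - t| ^ (lam - 1))
        (Set.Ioc a b) MeasureTheory.volume := by
      rw [intervalIntegrable_iff, Set.uIoc_of_le hab.le] at hdom; exact hdom
    apply MeasureTheory.Integrable.mono' hdom' hsm
    filter_upwards [MeasureTheory.ae_restrict_mem measurableSet_Ioc] with X hX
    exact hgbound X (Set.Ioc_subset_Icc_self hX) (t : ℂ) le_rfl
  -- shared infrastructure for the boundary values
  have hneK : ∀ K : ℂ, K.im ≠ 0 → ∀ X : ℝ, ((X : ℂ) - K) ≠ 0 := by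
    intro K hK X h
    apply hK
    have := congrArg Complex.im h
    simpa using this.symm
  have himage : ∀ s : ℝ, s ≠ 0 →
      ((t : ℂ) + s * I) ∉ ((fun x : ℝ => (x : ℂ)) '' Set.Icc a b) := by
    rintro s hs ⟨x, _, hxe⟩
    apply hs
    have := congrArg Complex.im hxe
    simpa using this.symm
  have hsplitK : ∀ K : ℂ, K.im ≠ 0 →
      (∫ X in a..b, χ X / ((X : ℂ) - K)) =
        (∫ X in a..b, (χ X - χ t) / ((X : ℂ) - K))
          + χ t * (Complex.log ((b : ℂ) - K) - Complex.log ((a : ℂ) - K)) := by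
    intro K hK
    have hint1 : IntervalIntegrable (fun X : ℝ => (χ X - χ t) / ((X : ℂ) - K))
        MeasureTheory.volume a b := by
      apply ContinuousOn.intervalIntegrable
      rw [Set.uIcc_of_le hab.le]
      exact (hχc.sub continuousOn_const).div
        (Complex.continuous_ofReal.continuousOn.sub continuousOn_const)
        (fun x _ => hneK K hK x)
    have hint2 : IntervalIntegrable (fun X : ℝ => χ t * (1 / ((X : ℂ) - K)))
        MeasureTheory.volume a b := by
      apply Continuous.intervalIntegrable
      exact continuous_const.mul (continuous_const.div
        (Complex.continuous_ofReal.sub continuous_const) (fun x => hneK K hK x))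
    have heq : ∀ X ∈ Set.uIcc a b, χ X / ((X : ℂ) - K)
        = (χ X - χ t) / ((X : ℂ) - K) + χ t * (1 / ((X : ℂ) - K)) := by
      intro X _
      have := hneK K hK X
      field_simp
      ring
    rw [intervalIntegral.integral_congr heq, intervalIntegral.integral_add hint1 hint2,
      intervalIntegral.integral_const_mul, PlemeljAux.integral_kernelC a b K hK]
  have hDCT : ∀ Kf : ℝ → ℂ, (∀ ε : ℝ, 0 < ε → (Kf ε).im ≠ 0) → (∀ ε : ℝ, (Kf ε).re = t) →
      Tendsto Kf (nhdsWithin 0 (Set.Ioi 0)) (nhds (t : ℂ)) →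
      Tendsto (fun ε : ℝ => ∫ X in a..b, (χ X - χ t) / ((X : ℂ) - Kf ε))
        (nhdsWithin 0 (Set.Ioi 0)) (nhds (∫ X in a..b, g X)) := by
    intro Kf hKim hKre hKtend
    apply intervalIntegral.tendsto_integral_filter_of_dominated_convergence
      (fun X => c * |X - t| ^ (lam - 1)) ?_ ?_ hdom ?_
    · filter_upwards [self_mem_nhdsWithin] with ε hε
      apply ContinuousOn.aestronglyMeasurable (μ := MeasureTheory.volume) ?_ measurableSet_uIoc
      rw [Set.uIoc_of_le hab.le]
      exact ((hχc.mono Set.Ioc_subset_Icc_self).sub continuousOn_const).div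
        (Complex.continuous_ofReal.continuousOn.sub continuousOn_const)
        (fun x _ => hneK _ (hKim ε hε) x)
    · filter_upwards [self_mem_nhdsWithin] with ε hε
      apply Filter.Eventually.of_forall
      intro X hX
      rw [Set.uIoc_of_le hab.le] at hX
      apply hgbound X (Set.Ioc_subset_Icc_self hX)
      have hre : ((X : ℂ) - Kf ε).re = X - t := by
        simp [Complex.sub_re, hKre ε]
      calc ‖(X : ℂ) - (t : ℂ)‖ = |X - t| := habs X
        _ = |((X : ℂ) - Kf ε).re| := by rw [hre]
        _ ≤ _ := Complex.abs_re_le_norm _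
    · have hae : ∀ᵐ X : ℝ, X ≠ t := by
        have h : {X : ℝ | ¬ X ≠ t} = {t} := by ext x; simp
        rw [MeasureTheory.ae_iff, h]
        exact MeasureTheory.measure_singleton t
      filter_upwards [hae] with X hX _
      have hden : Tendsto (fun ε : ℝ => (X : ℂ) - Kf ε) (nhdsWithin 0 (Set.Ioi 0))
          (nhds ((X : ℂ) - (t : ℂ))) := tendsto_const_nhds.sub hKtend
      exact tendsto_const_nhds.div hden (sub_ne_zero.2 (by exact_mod_cast hX))
  have hKu : Tendsto (fun ε : ℝ => (t : ℂ) + ε * I) (nhdsWithin 0 (Set.Ioi 0))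
      (nhds (t : ℂ)) := by
    have hcont2 : Continuous (fun ε : ℝ => (t : ℂ) + (ε : ℂ) * I) :=
      continuous_const.add (Complex.continuous_ofReal.mul continuous_const)
    have := (hcont2.tendsto 0).mono_left (nhdsWithin_le_nhds (s := Set.Ioi 0))
    simpa using this
  have hKl : Tendsto (fun ε : ℝ => (t : ℂ) - ε * I) (nhdsWithin 0 (Set.Ioi 0))
      (nhds (t : ℂ)) := by
    have hcont2 : Continuous (fun ε : ℝ => (t : ℂ) - (ε : ℂ) * I) :=
      continuous_const.sub (Complex.continuous_ofReal.mul continuous_const)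
    have := (hcont2.tendsto 0).mono_left (nhdsWithin_le_nhds (s := Set.Ioi 0))
    simpa using this
  have hlogb : ∀ Kf : ℝ → ℂ, Tendsto Kf (nhdsWithin 0 (Set.Ioi 0)) (nhds (t : ℂ)) →
      Tendsto (fun ε : ℝ => Complex.log ((b : ℂ) - Kf ε)) (nhdsWithin 0 (Set.Ioi 0))
        (nhds ((Real.log (b - t) : ℝ) : ℂ)) := by
    intro Kf hKtend
    have h1 : ContinuousAt Complex.log ((b : ℂ) - (t : ℂ)) := by
      apply continuousAt_clog
      left
      simp only [Complex.sub_re, Complex.ofReal_re]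
      linarith
    have h3 := h1.tendsto.comp (tendsto_const_nhds.sub hKtend)
    have h4 : Complex.log ((b : ℂ) - (t : ℂ)) = ((Real.log (b - t) : ℝ) : ℂ) := by
      rw [← Complex.ofReal_sub]
      exact (Complex.ofReal_log (by linarith : (0:ℝ) ≤ b - t)).symm
    rwa [h4] at h3
  have hre_a : ((a : ℂ) - (t : ℂ)).re < 0 := by
    simp only [Complex.sub_re, Complex.ofReal_re]; linarith
  have him_a : ((a : ℂ) - (t : ℂ)).im = 0 := by simp
  have habs_a : ‖(a : ℂ) - (t : ℂ)‖ = t - a := by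
    rw [← Complex.ofReal_sub, Complex.norm_real, Real.norm_eq_abs, abs_of_neg (by linarith : a - t < 0)]
    ring
  have hLdiv : ((Real.log ((b - t) / (t - a)) : ℝ) : ℂ)
      = ((Real.log (b - t) : ℝ) : ℂ) - ((Real.log (t - a) : ℝ) : ℂ) := by
    rw [Real.log_div (by linarith : b - t ≠ 0) (by linarith : t - a ≠ 0)]
    push_cast
    ring
  have hπ : (Real.pi : ℂ) ≠ 0 := by exact_mod_cast Real.pi_ne_zero
  -- the principal value
  refine ⟨(∫ X in a..b, g X) + χ t * ((Real.log ((b - t) / (t - a)) : ℝ) : ℂ), ?_, ?_, ?_⟩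
  · -- PV part
    have hPcont : ContinuousOn (fun x => ∫ X in a..x, g X) (Set.uIcc a b) :=
      intervalIntegral.continuousOn_primitive_interval' hg_int Set.left_mem_uIcc
    have htmem' : t ∈ Set.uIcc a b := by rw [Set.uIcc_of_le hab.le]; exact htmem
    have htend_sub : Tendsto (fun δ : ℝ => t - δ) (nhdsWithin 0 (Set.Ioi 0))
        (nhdsWithin t (Set.uIcc a b)) := by
      rw [tendsto_nhdsWithin_iff]
      constructor
      · have h : Tendsto (fun δ : ℝ => t - δ) (nhds 0) (nhds t) := by
          simpa using (tendsto_const_nhds (x := t)).sub (tendsto_id (x := nhds (0:ℝ)))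
        exact h.mono_left nhdsWithin_le_nhds
      · filter_upwards [Ioo_mem_nhdsGT_of_mem
          (Set.mem_Ico.2 ⟨le_rfl, (by linarith : (0:ℝ) < t - a)⟩)] with δ hδ
        rw [Set.uIcc_of_le hab.le]
        exact ⟨by linarith [hδ.2], by linarith [hδ.1]⟩
    have htend_add : Tendsto (fun δ : ℝ => t + δ) (nhdsWithin 0 (Set.Ioi 0))
        (nhdsWithin t (Set.uIcc a b)) := by
      rw [tendsto_nhdsWithin_iff]
      constructor
      · have h : Tendsto (fun δ : ℝ => t + δ) (nhds 0) (nhds t) := by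
          simpa using (tendsto_const_nhds (x := t)).add (tendsto_id (x := nhds (0:ℝ)))
        exact h.mono_left nhdsWithin_le_nhds
      · filter_upwards [Ioo_mem_nhdsGT_of_mem
          (Set.mem_Ico.2 ⟨le_rfl, (by linarith : (0:ℝ) < b - t)⟩)] with δ hδ
        rw [Set.uIcc_of_le hab.le]
        exact ⟨by linarith [hδ.1], by linarith [hδ.2]⟩
    have h1 := (hPcont t htmem').tendsto.comp htend_sub
    have h2 := (hPcont t htmem').tendsto.comp htend_add
    have hmain : Tendsto (fun δ : ℝ =>
        ((∫ X in a..(t - δ), g X) + ((∫ X in a..b, g X) - ∫ X in a..(t + δ), g X))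
          + χ t * ((Real.log ((b - t) / (t - a)) : ℝ) : ℂ))
        (nhdsWithin 0 (Set.Ioi 0))
        (nhds ((∫ X in a..b, g X) + χ t * ((Real.log ((b - t) / (t - a)) : ℝ) : ℂ))) := by
      have := (h1.add ((tendsto_const_nhds (x := (∫ X in a..b, g X))).sub h2)).add
        (tendsto_const_nhds (x := χ t * ((Real.log ((b - t) / (t - a)) : ℝ) : ℂ)))
      convert this using 2
      · rfl
      ring
    apply hmain.congr'
    have hm : (0:ℝ) ∈ Set.Ico 0 (min (t - a) (b - t)) :=
      Set.mem_Ico.2 ⟨le_rfl, lt_min (by linarith) (by linarith)⟩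
    filter_upwards [Ioo_mem_nhdsGT_of_mem hm] with δ hδ
    have hδ0 : 0 < δ := hδ.1
    have hδ1 : δ < t - a := lt_of_lt_of_le hδ.2 (min_le_left _ _)
    have hδ2 : δ < b - t := lt_of_lt_of_le hδ.2 (min_le_right _ _)
    have hsplit : ∀ u v : ℝ, Set.uIcc u v ⊆ Set.uIcc a b → t ∉ Set.uIcc u v →
        ∫ X in u..v, χ X / ((X : ℂ) - (t : ℂ))
          = (∫ X in u..v, g X) + χ t * ((Real.log ((v - t) / (u - t)) : ℝ) : ℂ) := by
      intro u v huv htuv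
      have hint1 : IntervalIntegrable g MeasureTheory.volume u v := hg_int.mono_set huv
      have hint2 : IntervalIntegrable (fun X : ℝ => χ t * (1 / ((X : ℂ) - (t : ℂ))))
          MeasureTheory.volume u v := by
        apply ContinuousOn.intervalIntegrable
        apply continuousOn_const.mul
        apply ContinuousOn.div continuousOn_const
          (Complex.continuous_ofReal.continuousOn.sub continuousOn_const)
        intro x hx
        show (x : ℂ) - (t : ℂ) ≠ 0
        rw [sub_ne_zero]
        intro h
        exact htuv ((Complex.ofReal_inj.1 h) ▸ hx)
      have heq : ∀ X ∈ Set.uIcc u v, χ X / ((X : ℂ) - (t : ℂ))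
          = g X + χ t * (1 / ((X : ℂ) - (t : ℂ))) := by
        intro X _
        by_cases hX : ((X : ℂ) - (t : ℂ)) = 0
        · rw [hX]; simp [hgdef, hX]
        · rw [hgdef]; field_simp; ring
      rw [intervalIntegral.integral_congr heq,
        intervalIntegral.integral_add hint1 hint2,
        intervalIntegral.integral_const_mul, PlemeljAux.integral_kernelR u v t htuv]
    have hnt1 : t ∉ Set.uIcc a (t - δ) := by
      rw [Set.uIcc_of_le (by linarith : a ≤ t - δ)]
      intro h; exact absurd h.2 (by linarith)
    have hnt2 : t ∉ Set.uIcc (t + δ) b := by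
      rw [Set.uIcc_of_le (by linarith : t + δ ≤ b)]
      intro h; exact absurd h.1 (by linarith)
    have hss1 : Set.uIcc a (t - δ) ⊆ Set.uIcc a b := by
      rw [Set.uIcc_of_le (by linarith : a ≤ t - δ), Set.uIcc_of_le hab.le]
      exact Set.Icc_subset_Icc le_rfl (by linarith)
    have hss0 : Set.uIcc a (t + δ) ⊆ Set.uIcc a b := by
      rw [Set.uIcc_of_le (by linarith : a ≤ t + δ), Set.uIcc_of_le hab.le]
      exact Set.Icc_subset_Icc le_rfl (by linarith)
    have hss2 : Set.uIcc (t + δ) b ⊆ Set.uIcc a b := by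
      rw [Set.uIcc_of_le (by linarith : t + δ ≤ b), Set.uIcc_of_le hab.le]
      exact Set.Icc_subset_Icc (by linarith) le_rfl
    rw [hsplit a (t - δ) hss1 hnt1, hsplit (t + δ) b hss2 hnt2]
    have hadj : (∫ X in a..(t + δ), g X) + (∫ X in (t + δ)..b, g X) = ∫ X in a..b, g X :=
      intervalIntegral.integral_add_adjacent_intervals (hg_int.mono_set hss0)
        (hg_int.mono_set hss2)
    have hlog : Real.log ((t - δ - t) / (a - t)) + Real.log ((b - t) / (t + δ - t))
        = Real.log ((b - t) / (t - a)) := by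
      have e1 : (t - δ - t) / (a - t) = δ / (t - a) := by
        rw [show t - δ - t = -δ by ring, show a - t = -(t - a) by ring, neg_div_neg_eq]
      have e2 : t + δ - t = δ := by ring
      rw [e1, e2, ← Real.log_mul (ne_of_gt (div_pos hδ0 (by linarith)))
        (ne_of_gt (div_pos (by linarith) hδ0))]
      congr 1
      have hδne : δ ≠ 0 := ne_of_gt hδ0
      rw [div_mul_div_comm, mul_comm (t - a) δ, mul_div_mul_left _ _ hδne]
    have hlogC : ((Real.log ((t - δ - t) / (a - t)) : ℝ) : ℂ)
        + ((Real.log ((b - t) / (t + δ - t)) : ℝ) : ℂ)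
        = ((Real.log ((b - t) / (t - a)) : ℝ) : ℂ) := by
      rw [← Complex.ofReal_add, hlog]
    linear_combination -hadj - χ t * hlogC
  · -- upper boundary value
    have hloga_u : Tendsto (fun ε : ℝ => Complex.log ((a : ℂ) - ((t : ℂ) + ε * I)))
        (nhdsWithin 0 (Set.Ioi 0))
        (nhds (((Real.log (t - a) : ℝ) : ℂ) - Real.pi * I)) := by
      have h1 := Complex.tendsto_log_nhdsWithin_im_neg_of_re_neg_of_im_zero hre_a him_a
      have h2 : Tendsto (fun ε : ℝ => (a : ℂ) - ((t : ℂ) + ε * I)) (nhdsWithin 0 (Set.Ioi 0))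
          (nhdsWithin ((a : ℂ) - (t : ℂ)) {z : ℂ | z.im < 0}) := by
        rw [tendsto_nhdsWithin_iff]
        refine ⟨tendsto_const_nhds.sub hKu, ?_⟩
        filter_upwards [self_mem_nhdsWithin] with ε hε
        simp only [Set.mem_setOf_eq, Complex.sub_im, Complex.add_im, Complex.ofReal_im,
          Complex.mul_im, Complex.I_im, Complex.I_re, Complex.ofReal_re]
        simpa using hε
      have h3 := h1.comp h2
      rw [habs_a] at h3
      exact h3
    have hDCTu := hDCT (fun ε => (t : ℂ) + ε * I)
      (fun ε hε => by simpa using ne_of_gt hε) (fun ε => by simp) hKu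
    have heq : ∀ᶠ ε : ℝ in nhdsWithin (0:ℝ) (Set.Ioi (0:ℝ)),
        (1 / (2 * (Real.pi : ℂ) * I)) *
          ((∫ X in a..b, (χ X - χ t) / ((X : ℂ) - ((t : ℂ) + ε * I)))
            + χ t * (Complex.log ((b : ℂ) - ((t : ℂ) + ε * I))
              - Complex.log ((a : ℂ) - ((t : ℂ) + ε * I))))
        = Φ ((t : ℂ) + ε * I) := by
      filter_upwards [self_mem_nhdsWithin] with ε hε
      rw [hΦ _ (himage ε (ne_of_gt hε)), hsplitK _ (by simpa using ne_of_gt hε)]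
    have hlim := ((hDCTu.add (((hlogb _ hKu).sub hloga_u).const_mul (χ t))).const_mul
      (1 / (2 * (Real.pi : ℂ) * I)))
    apply Filter.Tendsto.congr' heq
    convert hlim using 1
    rw [hLdiv]
    field_simp
    ring
  · -- lower boundary value
    have hloga_l : Tendsto (fun ε : ℝ => Complex.log ((a : ℂ) - ((t : ℂ) - ε * I)))
        (nhdsWithin 0 (Set.Ioi 0))
        (nhds (((Real.log (t - a) : ℝ) : ℂ) + Real.pi * I)) := by
      have h1 := Complex.tendsto_log_nhdsWithin_im_nonneg_of_re_neg_of_im_zero hre_a him_a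
      have h2 : Tendsto (fun ε : ℝ => (a : ℂ) - ((t : ℂ) - ε * I)) (nhdsWithin 0 (Set.Ioi 0))
          (nhdsWithin ((a : ℂ) - (t : ℂ)) {z : ℂ | 0 ≤ z.im}) := by
        rw [tendsto_nhdsWithin_iff]
        refine ⟨tendsto_const_nhds.sub hKl, ?_⟩
        filter_upwards [self_mem_nhdsWithin] with ε hε
        simp only [Set.mem_setOf_eq, Complex.sub_im, Complex.add_im, Complex.ofReal_im,
          Complex.mul_im, Complex.I_im, Complex.I_re, Complex.ofReal_re]
        simpa using (le_of_lt hε)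
      have h3 := h1.comp h2
      rw [habs_a] at h3
      exact h3
    have hDCTl := hDCT (fun ε => (t : ℂ) - ε * I)
      (fun ε hε => by simpa using ne_of_gt hε) (fun ε => by simp) hKl
    have heq : ∀ᶠ ε : ℝ in nhdsWithin (0:ℝ) (Set.Ioi (0:ℝ)),
        (1 / (2 * (Real.pi : ℂ) * I)) *
          ((∫ X in a..b, (χ X - χ t) / ((X : ℂ) - ((t : ℂ) - ε * I)))
            + χ t * (Complex.log ((b : ℂ) - ((t : ℂ) - ε * I))
              - Complex.log ((a : ℂ) - ((t : ℂ) - ε * I))))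
        = Φ ((t : ℂ) - ε * I) := by
      filter_upwards [self_mem_nhdsWithin] with ε hε
      have him : ((t : ℂ) - (ε : ℂ) * I) = (t : ℂ) + ((-ε : ℝ) : ℂ) * I := by push_cast; ring
      rw [him, hΦ _ (himage (-ε) (by simpa using (ne_of_gt hε))),
        hsplitK _ (by simpa using (ne_of_gt hε))]
    have hlim := ((hDCTl.add (((hlogb _ hKl).sub hloga_l).const_mul (χ t))).const_mul
      (1 / (2 * (Real.pi : ℂ) * I)))
    apply Filter.Tendsto.congr' heq
    convert hlim using 1
    rw [hLdiv]
    field_simp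
    ring
end

section
/- Let a < b be real, λ ∈ (0,1], and let G : ℝ → ℂ be a function, nonvanishing on [a,b], such that a continuous branch g := log G is Hölder continuous with exponent λ on [a,b]. Define ψ(K) = exp( (1/(2πi)) ∫_a^b g(X)/(X − K) dX ) for K ∈ ℂ ∖ [a,b]. Then ψ is holomorphic and nonvanishing on ℂ ∖ [a,b], ψ(K) → 1 as |K| → ∞, and for every t ∈ (a,b) the one-sided boundary values ψ₊(t) := lim_{ε→0⁺} ψ(t + iε) and ψ₋(t) := lim_{ε→0⁺} ψ(t − iε) exist and satisfy the jump relation ψ₊(t) = ψ₋(t)·G(t). -/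
open intervalIntegral Filter Complex Set MeasureTheory

set_option maxHeartbeats 1000000

lemma RH_cont (a b lam : ℝ) (hlam : 0 < lam) (g : ℝ → ℂ) (c : ℝ)
    (hHolder : ∀ x ∈ Set.Icc a b, ∀ y ∈ Set.Icc a b,
      ‖g x - g y‖ ≤ c * |x - y| ^ lam) :
    ContinuousOn g (Set.Icc a b) := by
  intro x hx
  rw [ContinuousWithinAt, tendsto_iff_dist_tendsto_zero]
  have hb : Tendsto (fun y : ℝ => c * |y - x| ^ lam) (nhdsWithin x (Set.Icc a b)) (nhds 0) := by
    have : Tendsto (fun y : ℝ => c * |y - x| ^ lam) (nhds x) (nhds (c * |x - x| ^ lam)) := by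
      apply Tendsto.const_mul
      exact (((continuous_id.sub continuous_const).abs).tendsto x).rpow_const (Or.inr hlam.le)
    simpa [Real.zero_rpow hlam.ne'] using this.mono_left nhdsWithin_le_nhds
  refine squeeze_zero' (Filter.eventually_of_mem self_mem_nhdsWithin fun y hy => dist_nonneg)
    (Filter.eventually_of_mem self_mem_nhdsWithin fun y hy => ?_) hb
  have := hHolder y hy x hx
  simpa [Complex.dist_eq] using this

-- distance to the segment
lemma RH_dist (a b : ℝ) (hab : a ≤ b) (K : ℂ)
    (hK : K ∉ ((fun x : ℝ => (x : ℂ)) '' Set.Icc a b)) :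
    ∃ δ > 0, ∀ X ∈ Set.Icc a b, δ ≤ ‖(X : ℂ) - K‖ := by
  set S : Set ℂ := (fun x : ℝ => (x : ℂ)) '' Set.Icc a b with hS
  have hSc : IsCompact S := (isCompact_Icc).image Complex.continuous_ofReal
  have hSne : S.Nonempty := ⟨a, ⟨a, ⟨le_refl a, hab⟩, rfl⟩⟩
  have hpos : 0 < Metric.infDist K S :=
    (hSc.isClosed.notMem_iff_infDist_pos hSne).mp hK
  refine ⟨Metric.infDist K S, hpos, fun X hX => ?_⟩
  have := Metric.infDist_le_dist_of_mem (x := K) (show (X : ℂ) ∈ S from ⟨X, hX, rfl⟩)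
  refine this.trans_eq ?_
  rw [Complex.dist_eq, norm_sub_rev]

lemma RH_aux_int (a b t lam : ℝ) (hat : a < t) (htb : t < b) (hlam : 0 < lam) :
    IntervalIntegrable (fun X => |X - t| ^ (lam - 1)) volume a b := by
  have hr : (-1 : ℝ) < lam - 1 := by linarith
  have h1 : IntervalIntegrable (fun X => |X - t| ^ (lam - 1)) volume a t := by
    have h0 : IntervalIntegrable (fun x : ℝ => x ^ (lam - 1)) volume 0 (t - a) :=
      intervalIntegrable_rpow' hr
    have h2 := h0.comp_sub_left t
    simp only [sub_sub_cancel, sub_zero] at h2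
    rw [intervalIntegrable_iff, uIoc_comm, uIoc_of_le hat.le] at h2
    rw [intervalIntegrable_iff, uIoc_of_le hat.le]
    refine h2.congr_fun (fun x hx => ?_) measurableSet_Ioc
    rw [_root_.abs_of_nonpos (by linarith [hx.2] : x - t ≤ 0), neg_sub]
  have h2 : IntervalIntegrable (fun X => |X - t| ^ (lam - 1)) volume t b := by
    have h0 : IntervalIntegrable (fun x : ℝ => x ^ (lam - 1)) volume 0 (b - t) :=
      intervalIntegrable_rpow' hr
    have h2 := h0.comp_sub_right t
    simp only [zero_add, sub_add_cancel] at h2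
    rw [intervalIntegrable_iff, uIoc_of_le htb.le] at h2
    rw [intervalIntegrable_iff, uIoc_of_le htb.le]
    refine h2.congr_fun (fun x hx => ?_) measurableSet_Ioc
    rw [_root_.abs_of_nonneg (by linarith [hx.1] : 0 ≤ x - t)]
  exact h1.trans h2

lemma RH_piece1 (a b t lam : ℝ) (hat : a < t) (htb : t < b) (hlam : 0 < lam) (hlam1 : lam ≤ 1)
    (g : ℝ → ℂ) (c : ℝ) (hc : 0 ≤ c)
    (hHolder : ∀ x ∈ Set.Icc a b, ∀ y ∈ Set.Icc a b,
      ‖g x - g y‖ ≤ c * |x - y| ^ lam)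
    (σ : ℝ) :
    Tendsto (fun ε : ℝ => ∫ X in a..b, (g X - g t) / ((X : ℂ) - ((t : ℂ) + (σ * ε) * I)))
      (nhdsWithin 0 (Set.Ioi 0))
      (nhds (∫ X in a..b, (g X - g t) / ((X : ℂ) - (t : ℂ)))) := by
  have hg : ContinuousOn g (Set.Icc a b) := RH_cont a b lam hlam g c hHolder
  have hIoc : Set.uIoc a b = Set.Ioc a b := uIoc_of_le (le_of_lt (hat.trans htb))
  have hsub : Set.uIoc a b ⊆ Set.Icc a b := by rw [hIoc]; exact Set.Ioc_subset_Icc_self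
  have hae : ∀ᵐ X ∂(volume : Measure ℝ), X ≠ t := by
    rw [ae_iff]
    have : {X : ℝ | ¬X ≠ t} = {t} := by ext X; simp
    rw [this]
    exact measure_singleton t
  refine intervalIntegral.tendsto_integral_filter_of_dominated_convergence
    (μ := volume) (l := nhdsWithin (0:ℝ) (Set.Ioi 0))
    (F := fun (ε : ℝ) (X : ℝ) => (g X - g t) / ((X : ℂ) - ((t : ℂ) + (σ * ε) * I)))
    (f := fun X : ℝ => (g X - g t) / ((X : ℂ) - (t : ℂ)))
    (fun X => c * |X - t| ^ (lam - 1)) ?_ ?_ ?_ ?_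
  · -- measurability
    refine Filter.Eventually.of_forall fun ε => ?_
    have h1 : AEStronglyMeasurable (fun X : ℝ => g X - g t) (volume.restrict (Set.uIoc a b)) :=
      ((hg.mono hsub).aestronglyMeasurable (hIoc ▸ measurableSet_Ioc)).sub aestronglyMeasurable_const
    have h2 : Measurable (fun X : ℝ => (X : ℂ) - ((t : ℂ) + (σ * ε) * I)) :=
      Complex.measurable_ofReal.sub measurable_const
    simp only [div_eq_mul_inv]
    exact (h1.aemeasurable.mul h2.inv.aemeasurable).aestronglyMeasurable
  · -- bound
    refine Filter.Eventually.of_forall fun ε => ?_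
    filter_upwards [hae] with X hXt hX
    have hXI : X ∈ Set.Icc a b := hsub hX
    have habs : |X - t| ≤ ‖(X : ℂ) - ((t : ℂ) + (σ * ε) * I)‖ := by
      have := Complex.abs_re_le_norm ((X : ℂ) - ((t : ℂ) + (σ * ε) * I))
      simpa using this
    have hpos : 0 < |X - t| := abs_pos.mpr (sub_ne_zero.mpr hXt)
    rw [norm_div]
    calc ‖g X - g t‖ / ‖(X : ℂ) - ((t : ℂ) + (σ * ε) * I)‖
        ≤ (c * |X - t| ^ lam) / |X - t| := by
          apply div_le_div₀ (by positivity) ?_ hpos habs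
          exact hHolder X hXI t ⟨hat.le, htb.le⟩
      _ = c * |X - t| ^ (lam - 1) := by
          rw [Real.rpow_sub_one hpos.ne']
          ring
  · -- bound integrable
    exact (RH_aux_int a b t lam hat htb hlam).const_mul c
  · -- pointwise limit
    filter_upwards [hae] with X hXt hX
    have hden : Tendsto (fun ε : ℝ => (X : ℂ) - ((t : ℂ) + (σ * ε) * I))
        (nhdsWithin 0 (Set.Ioi 0)) (nhds ((X : ℂ) - (t : ℂ))) := by
      have hcont : Continuous fun ε : ℝ => (X : ℂ) - ((t : ℂ) + (σ * ε) * I) := by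
        continuity
      have := (hcont.tendsto 0).mono_left (nhdsWithin_le_nhds (s := Set.Ioi 0))
      simpa using this
    have hne : (X : ℂ) - (t : ℂ) ≠ 0 := by
      rw [sub_ne_zero]
      exact_mod_cast fun h => hXt (by exact_mod_cast h)
    exact tendsto_const_nhds.div hden hne

lemma RH_elem_int (a b : ℝ) (K : ℂ) (hK : K.im ≠ 0) :
    ∫ X in a..b, ((X : ℂ) - K)⁻¹ =
      Complex.log ((b : ℂ) - K) - Complex.log ((a : ℂ) - K) := by
  have hne : ∀ X : ℝ, (X : ℂ) - K ≠ 0 := by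
    intro X h
    apply hK
    have := congrArg Complex.im h
    simpa using this.symm
  have hmem : ∀ X : ℝ, (X : ℂ) - K ∈ Complex.slitPlane := by
    intro X
    refine Or.inr ?_
    simpa using hK
  have hderiv : ∀ X ∈ uIcc a b,
      HasDerivAt (fun X : ℝ => Complex.log ((X : ℂ) - K)) (((X : ℂ) - K)⁻¹) X := by
    intro X _
    have h1 : HasDerivAt (fun z : ℂ => Complex.log (z - K)) (((X : ℂ) - K)⁻¹) (X : ℂ) := by
      have h2 : HasDerivAt (fun z : ℂ => z - K) 1 (X : ℂ) := (hasDerivAt_id _).sub_const K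
      have h3 := (Complex.hasDerivAt_log (hmem X)).comp (X : ℂ) h2
      simp only [mul_one] at h3
      exact h3
    exact h1.comp_ofReal
  have hcont : Continuous fun X : ℝ => ((X : ℂ) - K)⁻¹ := by
    exact ((Complex.continuous_ofReal.sub continuous_const).inv₀ hne)
  exact integral_eq_sub_of_hasDerivAt hderiv (hcont.intervalIntegrable a b)

lemma RH_deriv (a b : ℝ) (hab : a < b) (g : ℝ → ℂ)
    (hg : ContinuousOn g (Set.Icc a b)) (K : ℂ)
    (hK : K ∉ ((fun x : ℝ => (x : ℂ)) '' Set.Icc a b))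
    (δ : ℝ) (hδ : 0 < δ) (hdist : ∀ X ∈ Set.Icc a b, δ ≤ ‖(X : ℂ) - K‖) :
    HasDerivAt (fun K : ℂ => ∫ X in a..b, g X / ((X : ℂ) - K))
      (∫ X in a..b, g X / ((X : ℂ) - K) ^ 2) K := by
  obtain ⟨M, hM⟩ := (isCompact_Icc.image_of_continuousOn hg).isBounded.exists_norm_le
  have hM0 : 0 ≤ M := le_trans (norm_nonneg _) (hM _ ⟨a, ⟨le_refl a, hab.le⟩, rfl⟩)
  have hIoc : Set.uIoc a b = Set.Ioc a b := uIoc_of_le hab.le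
  have hsub : Set.uIoc a b ⊆ Set.Icc a b := by rw [hIoc]; exact Set.Ioc_subset_Icc_self
  have hgM : ∀ X ∈ Set.Icc a b, ‖g X‖ ≤ M := fun X hX => hM _ ⟨X, hX, rfl⟩
  -- key estimate: for K' in ball K (δ/2), X in Icc, |X - K'| ≥ δ/2
  have hfar : ∀ K' ∈ Metric.ball K (δ / 2), ∀ X ∈ Set.Icc a b,
      δ / 2 ≤ ‖(X : ℂ) - K'‖ := by
    intro K' hK' X hX
    have h1 : ‖(X : ℂ) - K‖ ≤ ‖(X : ℂ) - K'‖ + ‖K' - K‖ := by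
      simpa using norm_add_le ((X : ℂ) - K') (K' - K)
    have h2 : ‖K' - K‖ < δ / 2 := by
      rw [← Complex.dist_eq]; exact Metric.mem_ball.mp hK'
    have := hdist X hX
    linarith
  have hmeas : ∀ K' : ℂ, K' ∉ ((fun x : ℝ => (x : ℂ)) '' Set.Icc a b) →
      AEStronglyMeasurable (fun X : ℝ => g X / ((X : ℂ) - K'))
        (volume.restrict (Set.uIoc a b)) := by
    intro K' hK'
    have hne : ∀ X ∈ Set.Icc a b, (X : ℂ) - K' ≠ 0 := by
      intro X hX h
      exact hK' ⟨X, hX, by rw [sub_eq_zero] at h; simpa using h⟩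
    have : ContinuousOn (fun X : ℝ => g X / ((X : ℂ) - K')) (Set.Icc a b) :=
      hg.div ((Complex.continuous_ofReal.continuousOn).sub continuousOn_const) hne
    exact (this.mono hsub).aestronglyMeasurable (hIoc ▸ measurableSet_Ioc)
  have hopen : IsOpen ((fun x : ℝ => (x : ℂ)) '' Set.Icc a b)ᶜ :=
    ((isCompact_Icc.image Complex.continuous_ofReal).isClosed).isOpen_compl
  have hint : IntervalIntegrable (fun X : ℝ => g X / ((X : ℂ) - K)) volume a b := by
    have hne : ∀ X ∈ Set.Icc a b, (X : ℂ) - K ≠ 0 := by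
      intro X hX h
      exact hK ⟨X, hX, by rw [sub_eq_zero] at h; simpa using h⟩
    have hconn : ContinuousOn (fun X : ℝ => g X / ((X : ℂ) - K)) (Set.Icc a b) :=
      hg.div ((Complex.continuous_ofReal.continuousOn).sub continuousOn_const) hne
    rw [← Set.uIcc_of_le hab.le] at hconn
    exact hconn.intervalIntegrable
  have := intervalIntegral.hasDerivAt_integral_of_dominated_loc_of_deriv_le
    (F := fun K' : ℂ => fun X : ℝ => g X / ((X : ℂ) - K'))
    (F' := fun K' : ℂ => fun X : ℝ => g X / ((X : ℂ) - K') ^ 2)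
    (x₀ := K) (bound := fun _ => M / (δ / 2) ^ 2)
    (s := Metric.ball K (δ / 2)) (Metric.ball_mem_nhds K (half_pos hδ))
    ?_ hint ?_ ?_ ?_ ?_
  · exact this.2
  · -- hF_meas
    filter_upwards [hopen.mem_nhds hK] with K' hK'
    exact hmeas K' hK'
  · -- hF'_meas
    have hne : ∀ X ∈ Set.Icc a b, ((X : ℂ) - K) ^ 2 ≠ 0 := by
      intro X hX
      apply pow_ne_zero
      intro h
      exact hK ⟨X, hX, by rw [sub_eq_zero] at h; simpa using h⟩
    have : ContinuousOn (fun X : ℝ => g X / ((X : ℂ) - K) ^ 2) (Set.Icc a b) :=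
      hg.div (((Complex.continuous_ofReal.continuousOn).sub continuousOn_const).pow 2) hne
    exact (this.mono hsub).aestronglyMeasurable (hIoc ▸ measurableSet_Ioc)
  · -- h_bound
    refine Filter.Eventually.of_forall fun X => fun hX K' hK' => ?_
    have hXI := hsub hX
    have hfar' := hfar K' hK' X hXI
    rw [norm_div]
    have h2 : (δ / 2) ^ 2 ≤ ‖((X : ℂ) - K') ^ 2‖ := by
      rw [norm_pow]
      exact pow_le_pow_left₀ (half_pos hδ).le hfar' 2
    apply div_le_div₀ (by positivity) (hgM X hXI) (by positivity) h2
  · -- bound integrable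
    exact intervalIntegrable_const
  · -- h_diff
    refine Filter.Eventually.of_forall fun X => fun hX K' hK' => ?_
    have hXI := hsub hX
    have hne : (X : ℂ) - K' ≠ 0 := by
      intro h
      have := hfar K' hK' X hXI
      rw [h] at this
      simp at this
      linarith
    have h1 : HasDerivAt (fun w : ℂ => (X : ℂ) - w) (-1) K' := by
      simpa using (hasDerivAt_id K').const_sub ((X : ℂ))
    have h2 : HasDerivAt (fun w : ℂ => ((X : ℂ) - w)⁻¹) (((X : ℂ) - K') ^ 2)⁻¹ K' := by
      have := h1.inv hne
      rw [neg_neg, one_div] at this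
      exact this
    have h3 := h2.const_mul (g X)
    simpa [div_eq_mul_inv] using h3

set_option maxHeartbeats 1000000 in
/-- Solution of the scalar Riemann–Hilbert problem ψ₊ = ψ₋·G on the real
interval [a,b]: the Cauchy-integral exponential
ψ(K) = exp((1/2πi)∫_a^b log G(X)/(X − K) dX) is holomorphic and nonvanishing
off [a,b], normalized to 1 at infinity, and its boundary values from the
upper (+) and lower (−) half-planes exist and satisfy ψ₊ = ψ₋·G on (a,b). -/
theorem scalar_riemann_hilbert_solution
    (a b : ℝ) (hab : a < b) (lam : ℝ) (hlam : lam ∈ Set.Ioc (0 : ℝ) 1)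
    (G g : ℝ → ℂ)
    (hGne : ∀ x ∈ Set.Icc a b, G x ≠ 0)
    (hlog : ∀ x ∈ Set.Icc a b, Complex.exp (g x) = G x)
    (c : ℝ) (hc : 0 ≤ c)
    (hHolder : ∀ x ∈ Set.Icc a b, ∀ y ∈ Set.Icc a b,
      ‖g x - g y‖ ≤ c * |x - y| ^ lam)
    (ψ : ℂ → ℂ)
    (hψ : ∀ K : ℂ, K ∉ ((fun x : ℝ => (x : ℂ)) '' Set.Icc a b) →
      ψ K = Complex.exp
        ((1 / (2 * Real.pi * I)) * ∫ X in a..b, g X / ((X : ℂ) - K))) :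
    (∀ K ∈ ((fun x : ℝ => (x : ℂ)) '' Set.Icc a b)ᶜ,
        DifferentiableAt ℂ ψ K ∧ ψ K ≠ 0) ∧
    Tendsto ψ (Bornology.cobounded ℂ) (nhds 1) ∧
    ∀ t ∈ Set.Ioo a b, ∃ ψp ψm : ℂ,
      Tendsto (fun ε : ℝ => ψ ((t : ℂ) + ε * I))
        (nhdsWithin 0 (Set.Ioi 0)) (nhds ψp) ∧
      Tendsto (fun ε : ℝ => ψ ((t : ℂ) - ε * I))
        (nhdsWithin 0 (Set.Ioi 0)) (nhds ψm) ∧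
      ψp = ψm * G t := by
  obtain ⟨hlam0, hlam1⟩ := hlam
  have hg : ContinuousOn g (Set.Icc a b) := RH_cont a b lam hlam0 g c hHolder
  have hSclosed : IsClosed ((fun x : ℝ => (x : ℂ)) '' Set.Icc a b) :=
    ((isCompact_Icc.image Complex.continuous_ofReal)).isClosed
  set S := ((fun x : ℝ => (x : ℂ)) '' Set.Icc a b) with hSdef
  set Φ : ℂ → ℂ := fun K => ∫ X in a..b, g X / ((X : ℂ) - K) with hΦdef
  have him_not : ∀ K : ℂ, K.im ≠ 0 → K ∉ S := by
    rintro K h ⟨x, hx, rfl⟩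
    simp at h
  refine ⟨?_, ?_, ?_⟩
  · -- Part 1 : differentiable and nonvanishing
    intro K hK
    rw [Set.mem_compl_iff] at hK
    obtain ⟨δ, hδ, hdist⟩ := RH_dist a b hab.le K hK
    have hD : HasDerivAt Φ (∫ X in a..b, g X / ((X : ℂ) - K) ^ 2) K :=
      RH_deriv a b hab g hg K hK δ hδ hdist
    have hDiff : DifferentiableAt ℂ
        (fun K' : ℂ => Complex.exp ((1 / (2 * Real.pi * I)) * Φ K')) K :=
      (hD.differentiableAt.const_mul _).cexp
    refine ⟨hDiff.congr_of_eventuallyEq ?_, ?_⟩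
    · filter_upwards [hSclosed.isOpen_compl.mem_nhds hK] with K' hK'
      exact hψ K' hK'
    · rw [hψ K hK]
      exact Complex.exp_ne_zero _
  · -- Part 2 : limit 1 at infinity
    obtain ⟨M, hM⟩ := (isCompact_Icc.image_of_continuousOn hg).isBounded.exists_norm_le
    have hM0 : 0 ≤ M := le_trans (norm_nonneg _) (hM _ ⟨a, ⟨le_refl a, hab.le⟩, rfl⟩)
    set R := max |a| |b| with hR
    have hR0 : 0 ≤ R := le_trans (abs_nonneg a) (le_max_left _ _)
    have hxR : ∀ x ∈ Set.Icc a b, ‖(x : ℂ)‖ ≤ R := by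
      intro x hx
      rw [Complex.norm_real]
      exact abs_le_max_abs_abs hx.1 hx.2
    have hbig : ∀ᶠ K : ℂ in Bornology.cobounded ℂ, R + 1 ≤ ‖K‖ :=
      tendsto_norm_cobounded_atTop.eventually (eventually_ge_atTop (R + 1))
    have hKnotS : ∀ K : ℂ, R + 1 ≤ ‖K‖ → K ∉ S := by
      rintro K hRK ⟨x, hx, rfl⟩
      have := hxR x hx
      simp only [hSdef] at hRK
      linarith [hRK]
    have hΦb : ∀ K : ℂ, R + 1 ≤ ‖K‖ → ‖Φ K‖ ≤ M / (‖K‖ - R) * |b - a| := by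
      intro K hRK
      apply intervalIntegral.norm_integral_le_of_norm_le_const
      intro X hX
      have hXI : X ∈ Set.Icc a b := by
        rw [Set.uIoc_of_le hab.le] at hX
        exact Set.Ioc_subset_Icc_self hX
      have h1 : ‖K‖ - R ≤ ‖(X : ℂ) - K‖ := by
        have h2 := norm_sub_norm_le K ((X : ℂ))
        have h3 := hxR X hXI
        rw [norm_sub_rev] at h2
        linarith
      rw [norm_div]
      apply div_le_div₀ hM0 (hM _ ⟨X, hXI, rfl⟩) (by linarith) h1
    have hΦ0 : Tendsto Φ (Bornology.cobounded ℂ) (nhds 0) := by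
      apply squeeze_zero_norm'
      · filter_upwards [hbig] with K hK
        exact hΦb K hK
      · have h1 : Tendsto (fun K : ℂ => ‖K‖ + -R) (Bornology.cobounded ℂ) atTop :=
          tendsto_atTop_add_const_right _ (-R) tendsto_norm_cobounded_atTop
        have h2 : Tendsto (fun K : ℂ => M / (‖K‖ + -R) * |b - a|)
            (Bornology.cobounded ℂ) (nhds (0 * |b - a|)) :=
          (Tendsto.div_atTop tendsto_const_nhds h1).mul_const _
        simpa [sub_eq_add_neg] using h2
    have hexp : Tendsto (fun K : ℂ => Complex.exp ((1 / (2 * Real.pi * I)) * Φ K))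
        (Bornology.cobounded ℂ) (nhds 1) := by
      have h1 : Tendsto (fun K : ℂ => (1 / (2 * Real.pi * I)) * Φ K)
          (Bornology.cobounded ℂ) (nhds 0) := by
        simpa using hΦ0.const_mul (1 / (2 * Real.pi * I))
      have h2 := (Complex.continuous_exp.tendsto 0).comp h1
      rw [Complex.exp_zero] at h2
      exact h2
    apply hexp.congr'
    filter_upwards [hbig] with K hK
    exact (hψ K (hKnotS K hK)).symm
  · -- Part 3 : boundary values and jump
    intro t ht
    have htI : t ∈ Set.Icc a b := ⟨ht.1.le, ht.2.le⟩
    have hta : 0 < t - a := by linarith [ht.1]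
    have hbt : 0 < b - t := by linarith [ht.2]
    set l := nhdsWithin (0 : ℝ) (Set.Ioi 0) with hl
    set Ct := ∫ X in a..b, (g X - g t) / ((X : ℂ) - (t : ℂ)) with hCtdef
    have hdecomp : ∀ K : ℂ, K.im ≠ 0 →
        Φ K = (∫ X in a..b, (g X - g t) / ((X : ℂ) - K))
          + g t * (Complex.log ((b : ℂ) - K) - Complex.log ((a : ℂ) - K)) := by
      intro K hK
      have hne : ∀ X : ℝ, (X : ℂ) - K ≠ 0 := by
        intro X h
        apply hK
        have := congrArg Complex.im h
        simpa using this.symm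
      have hcont1 : ContinuousOn (fun X : ℝ => (g X - g t) / ((X : ℂ) - K)) (Set.Icc a b) :=
        (hg.sub continuousOn_const).div
          ((Complex.continuous_ofReal.continuousOn).sub continuousOn_const) (fun X _ => hne X)
      have hi1 : IntervalIntegrable (fun X : ℝ => (g X - g t) / ((X : ℂ) - K)) volume a b := by
        rw [← Set.uIcc_of_le hab.le] at hcont1
        exact hcont1.intervalIntegrable
      have hi2 : IntervalIntegrable (fun X : ℝ => g t * ((X : ℂ) - K)⁻¹) volume a b :=
        (continuous_const.mul
          ((Complex.continuous_ofReal.sub continuous_const).inv₀ hne)).intervalIntegrable a b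
      rw [← RH_elem_int a b K hK, ← intervalIntegral.integral_const_mul,
        ← intervalIntegral.integral_add hi1 hi2]
      apply intervalIntegral.integral_congr
      intro X hX
      have hXne := hne X
      field_simp
      ring
    -- generic one-sided limit
    have hside : ∀ σ : ℝ, σ ≠ 0 → ∀ La : ℂ,
        Tendsto (fun ε : ℝ => Complex.log ((a : ℂ) - ((t : ℂ) + (σ * ε) * I))) l (nhds La) →
        Tendsto (fun ε : ℝ => ψ ((t : ℂ) + (σ * ε) * I)) l
          (nhds (Complex.exp ((1 / (2 * Real.pi * I)) *
            (Ct + g t * (Complex.log ((b : ℂ) - (t : ℂ)) - La))))) := by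
      intro σ hσ La hLa
      have hbase : Tendsto (fun ε : ℝ => (b : ℂ) - ((t : ℂ) + (σ * ε) * I)) l
          (nhds ((b : ℂ) - (t : ℂ))) := by
        have hcont : Continuous fun ε : ℝ => (b : ℂ) - ((t : ℂ) + (σ * ε) * I) := by continuity
        have := (hcont.tendsto 0).mono_left (nhdsWithin_le_nhds (s := Set.Ioi 0))
        simpa using this
      have hmem : (b : ℂ) - (t : ℂ) ∈ Complex.slitPlane := Or.inl (by simpa using hbt)
      have hlogb : Tendsto (fun ε : ℝ => Complex.log ((b : ℂ) - ((t : ℂ) + (σ * ε) * I))) l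
          (nhds (Complex.log ((b : ℂ) - (t : ℂ)))) :=
        ((continuousAt_clog hmem).tendsto).comp hbase
      have hp1 := RH_piece1 a b t lam ht.1 ht.2 hlam0 hlam1 g c hc hHolder σ
      have hsum := hp1.add ((hlogb.sub hLa).const_mul (g t))
      have hεpos : ∀ᶠ ε : ℝ in l, ε ∈ Set.Ioi 0 := self_mem_nhdsWithin
      have hKim : ∀ ε : ℝ, ε ∈ Set.Ioi (0 : ℝ) → ((t : ℂ) + (σ * ε) * I).im ≠ 0 := by
        intro ε hε
        have : ((t : ℂ) + (σ * ε) * I).im = σ * ε := by simp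
        rw [this]
        exact mul_ne_zero hσ (ne_of_gt hε)
      have hΦside : Tendsto (fun ε : ℝ => Φ ((t : ℂ) + (σ * ε) * I)) l
          (nhds (Ct + g t * (Complex.log ((b : ℂ) - (t : ℂ)) - La))) := by
        apply hsum.congr'
        filter_upwards [hεpos] with ε hε
        exact (hdecomp _ (hKim ε hε)).symm
      have hexp := (Complex.continuous_exp.tendsto _).comp
        (hΦside.const_mul (1 / (2 * Real.pi * I)))
      apply hexp.congr'
      filter_upwards [hεpos] with ε hε
      exact (hψ _ (him_not _ (hKim ε hε))).symm
    -- the log limits on the two sides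
    have hre : ((a : ℂ) - (t : ℂ)).re < 0 := by
      simp only [Complex.sub_re, Complex.ofReal_re]
      linarith
    have him0 : ((a : ℂ) - (t : ℂ)).im = 0 := by simp
    have habs : ‖(a : ℂ) - (t : ℂ)‖ = t - a := by
      rw [show (a : ℂ) - (t : ℂ) = ((a - t : ℝ) : ℂ) by push_cast; ring, Complex.norm_real, Real.norm_eq_abs,
        abs_of_neg (by linarith), neg_sub]
    have hbaseA : ∀ σ : ℝ, Tendsto (fun ε : ℝ => (a : ℂ) - ((t : ℂ) + (σ * ε) * I)) l
        (nhds ((a : ℂ) - (t : ℂ))) := by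
      intro σ
      have hcont : Continuous fun ε : ℝ => (a : ℂ) - ((t : ℂ) + (σ * ε) * I) := by continuity
      have := (hcont.tendsto 0).mono_left (nhdsWithin_le_nhds (s := Set.Ioi 0))
      simpa using this
    have hLaP : Tendsto (fun ε : ℝ => Complex.log ((a : ℂ) - ((t : ℂ) + ((1 : ℝ) * ε) * I))) l
        (nhds ((Real.log (t - a) : ℂ) - Real.pi * I)) := by
      have hkey := Complex.tendsto_log_nhdsWithin_im_neg_of_re_neg_of_im_zero hre him0
      rw [habs] at hkey
      apply hkey.comp
      apply tendsto_nhdsWithin_of_tendsto_nhds_of_eventually_within _ (hbaseA 1)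
      filter_upwards [self_mem_nhdsWithin] with ε hε
      have him : ((a : ℂ) - ((t : ℂ) + ((1 : ℝ) * ε) * I)).im = -ε := by simp
      simp only [Set.mem_setOf_eq, him]
      have : (0:ℝ) < ε := hε
      linarith
    have hLaM : Tendsto (fun ε : ℝ => Complex.log ((a : ℂ) - ((t : ℂ) + ((-1 : ℝ) * ε) * I))) l
        (nhds ((Real.log (t - a) : ℂ) + Real.pi * I)) := by
      have hkey := Complex.tendsto_log_nhdsWithin_im_nonneg_of_re_neg_of_im_zero hre him0
      rw [habs] at hkey
      apply hkey.comp
      apply tendsto_nhdsWithin_of_tendsto_nhds_of_eventually_within _ (hbaseA (-1))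
      filter_upwards [self_mem_nhdsWithin] with ε hε
      have him : ((a : ℂ) - ((t : ℂ) + ((-1 : ℝ) * ε) * I)).im = ε := by simp
      simp only [Set.mem_setOf_eq, him]
      exact le_of_lt hε
    have hplus := hside 1 one_ne_zero _ hLaP
    have hminus := hside (-1) (by norm_num) _ hLaM
    refine ⟨Complex.exp ((1 / (2 * Real.pi * I)) * (Ct + g t * (Complex.log ((b : ℂ) - (t : ℂ))
        - ((Real.log (t - a) : ℂ) - Real.pi * I)))),
      Complex.exp ((1 / (2 * Real.pi * I)) * (Ct + g t * (Complex.log ((b : ℂ) - (t : ℂ))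
        - ((Real.log (t - a) : ℂ) + Real.pi * I)))), ?_, ?_, ?_⟩
    · apply hplus.congr
      intro ε
      norm_num
    · apply hminus.congr
      intro ε
      congr 1
      push_cast
      ring
    · rw [← hlog t htI, ← Complex.exp_add]
      congr 1
      have h2pi : (2 * (Real.pi : ℂ) * I) ≠ 0 := Complex.two_pi_I_ne_zero
      field_simp
      ring
end
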